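/- In the combinatorial interval game on I = [1, ℓ] with a filtration Y_1 ⊂ ⋯ ⊂ Y_r of finite subsets of ℤ with I ⊆ Y_r, where the adversary places black stones on fresh positions in I and the algorithm responds greedily by placing a white stone at an available element of the currently visible set Y^{(t)} minimizing relative distance to the adversary's move, the game ending when all of I is covered by black stones: the number of white stones in I at termination satisfies |W_T|/|I| ≥ 1/2 − O_r((log ℓ)/ℓ); more precisely |W_T| ≥ (ℓ − (2r log₂ ℓ + r))/2. -/

import Mathlib

/-- A transcript of the combinatorial interval game on `I = [1, ℓ] ⊆ ℤ`,
with a filtration `Y 1 ⊆ ⋯ ⊆ Y r` of finite subsets of `ℤ`, `I ⊆ Y r`. -/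
structure GameData where
  /-- length of the interior board `I = [1, ℓ]` -/
  ell : ℕ
  /-- number of levels of the filtration -/
  r : ℕ
  /-- number of turns until termination -/
  T : ℕ
  /-- the filtration of visible finite sets -/
  Y : ℕ → Finset ℤ
  /-- the visibility index at each turn -/
  vis : ℕ → ℕ
  /-- the adversary's (black-stone) move at each turn -/
  a : ℕ → ℤ
  /-- the algorithm's (white-stone) move at each turn, `none` = skip -/
  o : ℕ → Option ℤ
  /-- Nature-help white stones placed at the start of each turn -/
  help : ℕ → Finset ℤ
  /-- elements reserved by Nature at the end of each turn -/
  res : ℕ → Finset ℤ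

namespace GameData

/-- The interior board `I = [1, ℓ]`. -/
noncomputable def I (G : GameData) : Finset ℤ := Finset.Icc 1 (G.ell : ℤ)

/-- Black stones placed during turns `< t`. -/
def black (G : GameData) (t : ℕ) : Finset ℤ := (Finset.range t).image G.a

/-- White stones (Nature help and algorithm outputs) placed during turns `< t`. -/
def white (G : GameData) (t : ℕ) : Finset ℤ :=
  (Finset.range t).biUnion fun s => G.help s ∪ (G.o s).toFinset

/-- Positions occupied by a stone before turn `t`. -/
def occupiedBefore (G : GameData) (t : ℕ) : Finset ℤ := G.black t ∪ G.white t

/-- Positions reserved before turn `t`. -/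
def reserved (G : GameData) (t : ℕ) : Finset ℤ := (Finset.range t).biUnion G.res

/-- The rank of `x` in the increasing enumeration of the finite set `Y`. -/
def rank (Y : Finset ℤ) (x : ℤ) : ℕ := (Y.filter fun y => y < x).card

/-- The relative distance between `x` and `y` with respect to `Y`:
the difference of their ranks in the increasing enumeration of `Y`. -/
def rdist (Y : Finset ℤ) (x y : ℤ) : ℕ := ((rank Y x : ℤ) - (rank Y y : ℤ)).natAbs

/-- Positions available to the algorithm at turn `t`: elements of the visible set
not occupied by any stone (including this turn's Nature help and adversary move)
and not reserved. -/
def avail (G : GameData) (t : ℕ) : Finset ℤ :=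
  G.Y (G.vis t) \ (G.occupiedBefore t ∪ G.help t ∪ {G.a t} ∪ G.reserved t)

/-- The rules of the game. -/
def Valid (G : GameData) : Prop :=
  1 ≤ G.ell ∧ 1 ≤ G.r ∧
  -- filtration of finite sets with I ⊆ Y r
  (∀ i j, i ≤ j → G.Y i ⊆ G.Y j) ∧ G.I ⊆ G.Y G.r ∧
  -- the visibility index is the least level containing all black stones so far
  (∀ t, t < G.T → 1 ≤ G.vis t ∧ G.vis t ≤ G.r ∧ G.black (t + 1) ⊆ G.Y (G.vis t) ∧
    ∀ i, 1 ≤ i → i < G.vis t → ¬ G.black (t + 1) ⊆ G.Y i) ∧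
  -- Nature help: white stones placed in I on unoccupied positions
  (∀ t, t < G.T → G.help t ⊆ G.I ∧ Disjoint (G.help t) (G.occupiedBefore t)) ∧
  -- the adversary plays a position of I it has not used before
  (∀ t, t < G.T → G.a t ∈ G.I ∧ G.a t ∉ (Finset.range t).image G.a) ∧
  -- greedy algorithm: if an available position exists in I ∩ Y^{(t)}, place a white
  -- stone on an available element of Y^{(t)} minimizing relative distance to a t
  (∀ t, t < G.T → (∃ x ∈ G.I, x ∈ G.avail t) →
    ∃ w, G.o t = some w ∧ w ∈ G.avail t ∧
      ∀ z ∈ G.avail t, rdist (G.Y (G.vis t)) w (G.a t) ≤ rdist (G.Y (G.vis t)) z (G.a t)) ∧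
  -- otherwise the algorithm skips (possibly Nature places a white stone outside I)
  (∀ t, t < G.T → (¬ ∃ x ∈ G.I, x ∈ G.avail t) →
    G.o t = none ∨ ∃ w, G.o t = some w ∧ w ∈ G.avail t ∧ w ∉ G.I) ∧
  -- reservations: unused elements of the visible set outside I
  (∀ t, t < G.T → G.res t ⊆ G.Y (G.vis t) ∧ (∀ x ∈ G.res t, x ∉ G.I) ∧
    Disjoint (G.res t) (G.occupiedBefore (t + 1))) ∧
  -- termination: at turn T the black stones cover I
  G.I ⊆ G.black G.T

end GameData
open Finset

noncomputable section
open scoped Classical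

namespace GameData

variable (G : GameData)

/-! ### Rank lemmas -/

lemma rank_mono (Y : Finset ℤ) {a b : ℤ} (h : a ≤ b) : rank Y a ≤ rank Y b := by
  apply Finset.card_le_card
  intro z hz
  simp only [Finset.mem_filter] at hz ⊢
  exact ⟨hz.1, lt_of_lt_of_le hz.2 h⟩

lemma rank_lt (Y : Finset ℤ) {b c : ℤ} (hb : b ∈ Y) (h : b < c) : rank Y b + 1 ≤ rank Y c := by
  have hsub : insert b (Y.filter fun y => y < b) ⊆ Y.filter fun y => y < c := by
    intro z hz
    rcases Finset.mem_insert.1 hz with rfl | hz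
    · exact Finset.mem_filter.2 ⟨hb, h⟩
    · rcases Finset.mem_filter.1 hz with ⟨h1, h2⟩
      exact Finset.mem_filter.2 ⟨h1, h2.trans h⟩
  have hnot : b ∉ Y.filter fun y => y < b := by simp
  calc rank Y b + 1 = (insert b (Y.filter fun y => y < b)).card := by
        rw [Finset.card_insert_of_notMem hnot, rank]
    _ ≤ _ := Finset.card_le_card hsub

lemma rank_succ_le (Y : Finset ℤ) (b : ℤ) : rank Y (b + 1) ≤ rank Y b + 1 := by
  have hsub : (Y.filter fun y => y < b + 1) ⊆ insert b (Y.filter fun y => y < b) := by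
    intro z hz
    rcases Finset.mem_filter.1 hz with ⟨h1, h2⟩
    rcases eq_or_lt_of_le (Int.lt_add_one_iff.1 h2) with rfl | h3
    · exact Finset.mem_insert_self _ _
    · exact Finset.mem_insert_of_mem (Finset.mem_filter.2 ⟨h1, h3⟩)
  calc rank Y (b+1) ≤ (insert b (Y.filter fun y => y < b)).card := Finset.card_le_card hsub
    _ ≤ rank Y b + 1 := Finset.card_insert_le _ _

lemma rank_count (Y : Finset ℤ) {a b : ℤ} (h : a ≤ b) :
    rank Y a + (Y.filter fun z => a ≤ z ∧ z < b).card = rank Y b := by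
  unfold rank
  rw [← Finset.card_union_of_disjoint]
  · congr 1
    ext z
    simp only [Finset.mem_union, Finset.mem_filter]
    constructor
    · rintro (⟨h1, h2⟩ | ⟨h1, h2, h3⟩)
      · exact ⟨h1, lt_of_lt_of_le h2 h⟩
      · exact ⟨h1, h3⟩
    · rintro ⟨h1, h2⟩
      by_cases hz : z < a
      · exact Or.inl ⟨h1, hz⟩
      · exact Or.inr ⟨h1, le_of_not_gt hz, h2⟩
  · rw [Finset.disjoint_left]
    intro z hz hz'
    simp only [Finset.mem_filter] at hz hz'
    omega

lemma rdist_eq_of_le (Y : Finset ℤ) {x y : ℤ} (h : rank Y y ≤ rank Y x) :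
    rank Y y + rdist Y x y = rank Y x := by
  unfold rdist; omega

/-! ### Basic monotonicity and membership -/

lemma white_mono {s t : ℕ} (h : s ≤ t) : G.white s ⊆ G.white t :=
  Finset.biUnion_subset_biUnion_of_subset_left _ (Finset.range_subset_range.2 h)

lemma black_mono {s t : ℕ} (h : s ≤ t) : G.black s ⊆ G.black t :=
  Finset.image_subset_image (Finset.range_subset_range.2 h)

lemma occ_mono {s t : ℕ} (h : s ≤ t) : G.occupiedBefore s ⊆ G.occupiedBefore t :=
  Finset.union_subset_union (G.black_mono h) (G.white_mono h)

lemma help_subset_white (t : ℕ) : G.help t ⊆ G.white (t + 1) := by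
  intro x hx
  exact Finset.mem_biUnion.2 ⟨t, Finset.self_mem_range_succ t, Finset.mem_union_left _ hx⟩

lemma o_subset_white {t : ℕ} {w : ℤ} (h : G.o t = some w) : w ∈ G.white (t + 1) := by
  refine Finset.mem_biUnion.2 ⟨t, Finset.self_mem_range_succ t, Finset.mem_union_right _ ?_⟩
  simp [h]

lemma a_mem_black (t : ℕ) : G.a t ∈ G.black (t + 1) :=
  Finset.mem_image.2 ⟨t, Finset.self_mem_range_succ t, rfl⟩

end GameData
namespace GameData

variable (G : GameData)

section ValidLemmas

variable {G} (hG : G.Valid)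
include hG

lemma v_ell : 1 ≤ G.ell := hG.1
lemma v_r : 1 ≤ G.r := hG.2.1
lemma v_vis {t : ℕ} (ht : t < G.T) :
    1 ≤ G.vis t ∧ G.vis t ≤ G.r ∧ G.black (t + 1) ⊆ G.Y (G.vis t) :=
  ⟨(hG.2.2.2.2.1 t ht).1, (hG.2.2.2.2.1 t ht).2.1, (hG.2.2.2.2.1 t ht).2.2.1⟩
lemma v_a {t : ℕ} (ht : t < G.T) : G.a t ∈ G.I ∧ G.a t ∉ (Finset.range t).image G.a :=
  hG.2.2.2.2.2.2.1 t ht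
lemma v_greedy {t : ℕ} (ht : t < G.T) (hex : ∃ x ∈ G.I, x ∈ G.avail t) :
    ∃ w, G.o t = some w ∧ w ∈ G.avail t ∧
      ∀ z ∈ G.avail t, rdist (G.Y (G.vis t)) w (G.a t) ≤ rdist (G.Y (G.vis t)) z (G.a t) :=
  hG.2.2.2.2.2.2.2.1 t ht hex
lemma v_skip {t : ℕ} (ht : t < G.T) (hex : ¬ ∃ x ∈ G.I, x ∈ G.avail t) :
    G.o t = none ∨ ∃ w, G.o t = some w ∧ w ∈ G.avail t ∧ w ∉ G.I :=
  hG.2.2.2.2.2.2.2.2.1 t ht hex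
lemma v_res {t : ℕ} (ht : t < G.T) : ∀ x ∈ G.res t, x ∉ G.I :=
  (hG.2.2.2.2.2.2.2.2.2.1 t ht).2.1
lemma v_term : G.I ⊆ G.black G.T := hG.2.2.2.2.2.2.2.2.2.2

lemma a_inj {s t : ℕ} (hs : s < t) (ht : t < G.T) : G.a s ≠ G.a t := by
  intro h
  exact (v_a hG ht).2 (Finset.mem_image.2 ⟨s, Finset.mem_range.2 hs, h⟩)

lemma a_not_black {s t : ℕ} (hst : s ≤ t) (ht : t < G.T) : G.a t ∉ G.black s := by
  intro h
  rcases Finset.mem_image.1 h with ⟨u, hu, huv⟩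
  exact a_inj hG (lt_of_lt_of_le (Finset.mem_range.1 hu) hst) ht huv

lemma a_in_Y {t : ℕ} (ht : t < G.T) : G.a t ∈ G.Y (G.vis t) :=
  (v_vis hG ht).2.2 (G.a_mem_black t)

lemma o_avail {t : ℕ} {w : ℤ} (ht : t < G.T) (h : G.o t = some w) : w ∈ G.avail t := by
  by_cases hex : ∃ x ∈ G.I, x ∈ G.avail t
  · obtain ⟨w', h', hw', -⟩ := v_greedy hG ht hex
    rw [h] at h'
    exact (Option.some.inj h') ▸ hw'
  · rcases v_skip hG ht hex with h' | ⟨w', h', hw', -⟩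
    · rw [h] at h'; exact absurd h' (by simp)
    · rw [h] at h'
      exact (Option.some.inj h') ▸ hw'

lemma notavail_occ {t : ℕ} {z : ℤ} (ht : t < G.T) (hz : z ∈ G.I)
    (hzY : z ∈ G.Y (G.vis t)) (hna : z ∉ G.avail t) : z ∈ G.occupiedBefore (t + 1) := by
  have hmem : z ∈ G.occupiedBefore t ∪ G.help t ∪ {G.a t} ∪ G.reserved t := by
    by_contra h
    exact hna (Finset.mem_sdiff.2 ⟨hzY, h⟩)
  rcases Finset.mem_union.1 hmem with hmem | hres
  · rcases Finset.mem_union.1 hmem with hmem | ha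
    · rcases Finset.mem_union.1 hmem with hocc | hhelp
      · exact G.occ_mono (Nat.le_succ t) hocc
      · exact Finset.mem_union_right _ (G.help_subset_white t hhelp)
    · rcases Finset.mem_singleton.1 ha with rfl
      exact Finset.mem_union_left _ (G.a_mem_black t)
  · exfalso
    rcases Finset.mem_biUnion.1 hres with ⟨s, hs, hzs⟩
    exact v_res hG (lt_trans (Finset.mem_range.1 hs) ht) z hzs hz

/-- A turn whose adversary move is "free" (not on a white stone) has its move
unoccupied at any earlier stage `s + 1 ≤ t + 1`. -/
lemma free_not_occ {s t : ℕ} (hst : s ≤ t) (ht : t < G.T)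
    (hfree : G.a t ∉ G.white (t + 1)) : G.a t ∉ G.occupiedBefore s := by
  intro h
  rcases Finset.mem_union.1 h with hb | hw
  · exact a_not_black hG hst ht hb
  · exact hfree (G.white_mono (le_trans hst (Nat.le_succ t)) hw)

end ValidLemmas

end GameData
namespace GameData

lemma rdist_comm (Y : Finset ℤ) (x y : ℤ) : rdist Y x y = rdist Y y x := by
  unfold rdist; omega

variable (G : GameData)

/-- A good turn: the algorithm places a white stone inside `I`. -/
def GoodT (t : ℕ) : Prop := ∃ w, G.o t = some w ∧ w ∈ G.I

/-- A free turn: the adversary's stone does not land on a white stone. -/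
def FreeT (t : ℕ) : Prop := G.a t ∉ G.white (t + 1)

/-- The size of the visible region from `a t` to the right end of `I`. -/
def Rcard (i t : ℕ) : ℕ := ((G.Y i).filter fun z => G.a t ≤ z ∧ z < (G.ell : ℤ) + 1).card

/-- The size of the visible region from the left end of `I` to `a t`. -/
def Lcard (i t : ℕ) : ℕ := ((G.Y i).filter fun z => 1 ≤ z ∧ z < G.a t + 1).card

/-- Turns at level `i` where the algorithm overflows to the right of `I`. -/
def RB (i : ℕ) : Finset ℕ := (Finset.range G.T).filter fun t => G.vis t = i ∧ G.FreeT t ∧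
  ∃ w, G.o t = some w ∧ w ∈ G.avail t ∧
    (∀ z ∈ G.avail t, rdist (G.Y i) w (G.a t) ≤ rdist (G.Y i) z (G.a t)) ∧ (G.ell : ℤ) < w

/-- Turns at level `i` where the algorithm overflows to the left of `I`. -/
def LB (i : ℕ) : Finset ℕ := (Finset.range G.T).filter fun t => G.vis t = i ∧ G.FreeT t ∧
  ∃ w, G.o t = some w ∧ w ∈ G.avail t ∧
    (∀ z ∈ G.avail t, rdist (G.Y i) w (G.a t) ≤ rdist (G.Y i) z (G.a t)) ∧ w < 1

/-- Turns at level `i` where no visible position of `I` is available. -/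
def TB (i : ℕ) : Finset ℕ := (Finset.range G.T).filter fun t => G.vis t = i ∧ G.FreeT t ∧
  ¬ ∃ x ∈ G.I, x ∈ G.avail t

section Main

variable {G} (hG : G.Valid)
include hG

lemma blocked {t i : ℕ} {w : ℤ} (ht : t < G.T) (hi : G.vis t = i)
    (hmin : ∀ z ∈ G.avail t, rdist (G.Y i) w (G.a t) ≤ rdist (G.Y i) z (G.a t))
    {z : ℤ} (hzY : z ∈ G.Y i) (hzI : z ∈ G.I)
    (hd : rdist (G.Y i) z (G.a t) < rdist (G.Y i) w (G.a t)) :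
    z ∈ G.occupiedBefore (t + 1) := by
  refine notavail_occ hG ht hzI (by rw [hi]; exact hzY) (fun hav => ?_)
  exact absurd (hmin z hav) (not_le.2 hd)

lemma RB_main {i s : ℕ} (hs : s ∈ G.RB i) {z : ℤ} (hzY : z ∈ G.Y i) (hzI : z ∈ G.I)
    (hocc : z ∉ G.occupiedBefore (s + 1)) :
    z < G.a s ∧ rank (G.Y i) z + G.Rcard i s ≤ rank (G.Y i) (G.a s) := by
  obtain ⟨hsr, hvis, -, w, how, hwav, hmin, hwl⟩ := Finset.mem_filter.1 hs
  have hsT : s < G.T := Finset.mem_range.1 hsr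
  have haI : 1 ≤ G.a s ∧ G.a s ≤ (G.ell : ℤ) := Finset.mem_Icc.1 (v_a hG hsT).1
  have haY : G.a s ∈ G.Y i := by rw [← hvis]; exact a_in_Y hG hsT
  have hwY : w ∈ G.Y i := by rw [← hvis]; exact (Finset.mem_sdiff.1 hwav).1
  have hzIcc : 1 ≤ z ∧ z ≤ (G.ell : ℤ) := Finset.mem_Icc.1 hzI
  have h1 : rank (G.Y i) (G.a s) ≤ rank (G.Y i) w := rank_mono _ (by omega)
  have hd := rdist_eq_of_le _ h1
  have hcount : rank (G.Y i) (G.a s) + G.Rcard i s = rank (G.Y i) ((G.ell : ℤ) + 1) :=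
    rank_count _ (by omega)
  have hmle : rank (G.Y i) ((G.ell : ℤ) + 1) ≤ rank (G.Y i) w := rank_mono _ (by omega)
  have hlt : z < G.a s := by
    by_contra hge
    push_neg at hge
    have hz1 : rank (G.Y i) z + 1 ≤ rank (G.Y i) w := rank_lt _ hzY (by omega)
    have hz2 : rank (G.Y i) (G.a s) ≤ rank (G.Y i) z := rank_mono _ hge
    have hz3 := rdist_eq_of_le (G.Y i) hz2
    have hcomm := rdist_comm (G.Y i) (G.a s) z
    exact hocc (blocked hG hsT hvis hmin hzY hzI (by omega))
  have hz2 : rank (G.Y i) z ≤ rank (G.Y i) (G.a s) := rank_mono _ (le_of_lt hlt)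
  have hz3 := rdist_eq_of_le (G.Y i) hz2
  have hcomm := rdist_comm (G.Y i) (G.a s) z
  have hnb : rdist (G.Y i) w (G.a s) ≤ rdist (G.Y i) z (G.a s) := by
    by_contra h
    push_neg at h
    exact hocc (blocked hG hsT hvis hmin hzY hzI h)
  exact ⟨hlt, by omega⟩

lemma LB_main {i s : ℕ} (hs : s ∈ G.LB i) {z : ℤ} (hzY : z ∈ G.Y i) (hzI : z ∈ G.I)
    (hocc : z ∉ G.occupiedBefore (s + 1)) :
    G.a s < z ∧ rank (G.Y i) (G.a s + 1) + G.Lcard i s ≤ rank (G.Y i) z + 1 := by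
  obtain ⟨hsr, hvis, -, w, how, hwav, hmin, hwl⟩ := Finset.mem_filter.1 hs
  have hsT : s < G.T := Finset.mem_range.1 hsr
  have haI : 1 ≤ G.a s ∧ G.a s ≤ (G.ell : ℤ) := Finset.mem_Icc.1 (v_a hG hsT).1
  have haY : G.a s ∈ G.Y i := by rw [← hvis]; exact a_in_Y hG hsT
  have hwY : w ∈ G.Y i := by rw [← hvis]; exact (Finset.mem_sdiff.1 hwav).1
  have hzIcc : 1 ≤ z ∧ z ≤ (G.ell : ℤ) := Finset.mem_Icc.1 hzI
  have h1 : rank (G.Y i) w ≤ rank (G.Y i) (G.a s) := rank_mono _ (by omega)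
  have hd := rdist_eq_of_le _ h1
  rw [rdist_comm] at hd
  have hw1 : rank (G.Y i) w + 1 ≤ rank (G.Y i) 1 := rank_lt _ hwY (by omega)
  have hcount : rank (G.Y i) 1 + G.Lcard i s = rank (G.Y i) (G.a s + 1) :=
    rank_count _ (by omega)
  have hsucc : rank (G.Y i) (G.a s + 1) ≤ rank (G.Y i) (G.a s) + 1 := rank_succ_le _ _
  have hlt : G.a s < z := by
    by_contra hge
    push_neg at hge
    have hz1 : rank (G.Y i) 1 ≤ rank (G.Y i) z := rank_mono _ (by omega)
    have hz2 : rank (G.Y i) z ≤ rank (G.Y i) (G.a s) := rank_mono _ hge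
    have hz3 := rdist_eq_of_le (G.Y i) hz2
    have hcomm := rdist_comm (G.Y i) (G.a s) z
    exact hocc (blocked hG hsT hvis hmin hzY hzI (by omega))
  have hz2 : rank (G.Y i) (G.a s) ≤ rank (G.Y i) z := rank_mono _ (le_of_lt hlt)
  have hz3 := rdist_eq_of_le (G.Y i) hz2
  have hcomm := rdist_comm (G.Y i) (G.a s) z
  have hnb : rdist (G.Y i) w (G.a s) ≤ rdist (G.Y i) z (G.a s) := by
    by_contra h
    push_neg at h
    exact hocc (blocked hG hsT hvis hmin hzY hzI h)
  exact ⟨hlt, by omega⟩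

end Main

end GameData
namespace GameData

variable {G : GameData} (hG : G.Valid)

section Main2
include hG

lemma mem_RB_data {i t : ℕ} (ht : t ∈ G.RB i) :
    t < G.T ∧ G.vis t = i ∧ G.FreeT t := by
  obtain ⟨htr, h1, h2, -⟩ := Finset.mem_filter.1 ht
  exact ⟨Finset.mem_range.1 htr, h1, h2⟩

lemma mem_LB_data {i t : ℕ} (ht : t ∈ G.LB i) :
    t < G.T ∧ G.vis t = i ∧ G.FreeT t := by
  obtain ⟨htr, h1, h2, -⟩ := Finset.mem_filter.1 ht
  exact ⟨Finset.mem_range.1 htr, h1, h2⟩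

lemma a_self_facts {t : ℕ} (ht : t < G.T) (hvis : G.vis t = i) :
    G.a t ∈ G.Y i ∧ 1 ≤ G.a t ∧ G.a t ≤ (G.ell : ℤ) := by
  refine ⟨by rw [← hvis]; exact a_in_Y hG ht, ?_⟩
  exact Finset.mem_Icc.1 (v_a hG ht).1

lemma RB_double {i s t : ℕ} (hs : s ∈ G.RB i) (ht : t ∈ G.RB i) (hst : s < t) :
    2 * G.Rcard i s ≤ G.Rcard i t := by
  obtain ⟨htT, hvist, hfreet⟩ := mem_RB_data hG ht
  obtain ⟨hsT, hviss, -⟩ := mem_RB_data hG hs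
  obtain ⟨haY, ha1, hal⟩ := a_self_facts hG htT hvist
  have hocc : G.a t ∉ G.occupiedBefore (s + 1) := free_not_occ hG hst htT hfreet
  obtain ⟨-, hkey⟩ := RB_main hG hs haY (v_a hG htT).1 hocc
  obtain ⟨-, ha1s, hals⟩ := a_self_facts hG hsT hviss
  have hcs : rank (G.Y i) (G.a s) + G.Rcard i s = rank (G.Y i) ((G.ell : ℤ) + 1) :=
    rank_count _ (by omega)
  have hct : rank (G.Y i) (G.a t) + G.Rcard i t = rank (G.Y i) ((G.ell : ℤ) + 1) :=
    rank_count _ (by omega)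
  omega

lemma LB_double {i s t : ℕ} (hs : s ∈ G.LB i) (ht : t ∈ G.LB i) (hst : s < t) :
    2 * G.Lcard i s ≤ G.Lcard i t := by
  obtain ⟨htT, hvist, hfreet⟩ := mem_LB_data hG ht
  obtain ⟨hsT, hviss, -⟩ := mem_LB_data hG hs
  obtain ⟨haY, ha1, hal⟩ := a_self_facts hG htT hvist
  have hocc : G.a t ∉ G.occupiedBefore (s + 1) := free_not_occ hG hst htT hfreet
  obtain ⟨-, hkey⟩ := LB_main hG hs haY (v_a hG htT).1 hocc
  obtain ⟨-, ha1s, hals⟩ := a_self_facts hG hsT hviss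
  have hcs : rank (G.Y i) 1 + G.Lcard i s = rank (G.Y i) (G.a s + 1) :=
    rank_count _ (by omega)
  have hct : rank (G.Y i) 1 + G.Lcard i t = rank (G.Y i) (G.a t + 1) :=
    rank_count _ (by omega)
  have hsucc : rank (G.Y i) (G.a t) + 1 ≤ rank (G.Y i) (G.a t + 1) :=
    rank_lt _ haY (by omega)
  have hmono : rank (G.Y i) (G.a s) ≤ rank (G.Y i) (G.a t) := by
    obtain ⟨hlt, -⟩ := LB_main hG hs haY (v_a hG htT).1 hocc
    exact rank_mono _ (le_of_lt hlt)
  omega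

lemma Rcard_pos {i t : ℕ} (ht : t ∈ G.RB i) : 1 ≤ G.Rcard i t := by
  obtain ⟨htT, hvist, -⟩ := mem_RB_data hG ht
  obtain ⟨haY, ha1, hal⟩ := a_self_facts hG htT hvist
  refine Finset.card_pos.2 ⟨G.a t, Finset.mem_filter.2 ⟨haY, le_refl _, by omega⟩⟩

lemma Lcard_pos {i t : ℕ} (ht : t ∈ G.LB i) : 1 ≤ G.Lcard i t := by
  obtain ⟨htT, hvist, -⟩ := mem_LB_data hG ht
  obtain ⟨haY, ha1, hal⟩ := a_self_facts hG htT hvist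
  refine Finset.card_pos.2 ⟨G.a t, Finset.mem_filter.2 ⟨haY, ha1, by omega⟩⟩

lemma Rcard_le_ell {i t : ℕ} (ht : t ∈ G.RB i) : G.Rcard i t ≤ G.ell := by
  obtain ⟨htT, hvist, -⟩ := mem_RB_data hG ht
  obtain ⟨-, ha1, hal⟩ := a_self_facts hG htT hvist
  calc G.Rcard i t ≤ (Finset.Icc (1 : ℤ) (G.ell : ℤ)).card := by
        apply Finset.card_le_card
        intro z hz
        rcases Finset.mem_filter.1 hz with ⟨-, h1, h2⟩
        exact Finset.mem_Icc.2 (by omega)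
    _ = G.ell := by rw [Int.card_Icc]; omega

lemma Lcard_le_ell {i t : ℕ} (ht : t ∈ G.LB i) : G.Lcard i t ≤ G.ell := by
  obtain ⟨htT, hvist, -⟩ := mem_LB_data hG ht
  obtain ⟨-, ha1, hal⟩ := a_self_facts hG htT hvist
  calc G.Lcard i t ≤ (Finset.Icc (1 : ℤ) (G.ell : ℤ)).card := by
        apply Finset.card_le_card
        intro z hz
        rcases Finset.mem_filter.1 hz with ⟨-, h1, h2⟩
        exact Finset.mem_Icc.2 (by omega)
    _ = G.ell := by rw [Int.card_Icc]; omega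

lemma RL_le_ell {i s t : ℕ} (hs : s ∈ G.RB i) (ht : t ∈ G.LB i) :
    G.Rcard i s + G.Lcard i t ≤ G.ell := by
  obtain ⟨hsT, hviss, hfrees⟩ := mem_RB_data hG hs
  obtain ⟨htT, hvist, hfreet⟩ := mem_LB_data hG ht
  obtain ⟨haYs, ha1s, hals⟩ := a_self_facts hG hsT hviss
  obtain ⟨haYt, ha1t, halt⟩ := a_self_facts hG htT hvist
  -- first show a t < a s
  have hlt : G.a t < G.a s := by
    rcases lt_trichotomy s t with h | h | h
    · have hocc : G.a t ∉ G.occupiedBefore (s + 1) := free_not_occ hG h htT hfreet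
      exact (RB_main hG hs haYt (v_a hG htT).1 hocc).1
    · exfalso
      obtain ⟨-, -, -, w, how, -, -, hwl⟩ := Finset.mem_filter.1 hs
      obtain ⟨-, -, -, w', how', -, -, hwl'⟩ := Finset.mem_filter.1 ht
      rw [h] at how
      rw [how] at how'
      have := Option.some.inj how'
      have hell : 1 ≤ (G.ell : ℤ) := by exact_mod_cast v_ell hG
      omega
    · have hocc : G.a s ∉ G.occupiedBefore (t + 1) := free_not_occ hG h hsT hfrees
      exact (LB_main hG ht haYs (v_a hG hsT).1 hocc).1
  have hdisj : Disjoint ((G.Y i).filter fun z => G.a s ≤ z ∧ z < (G.ell : ℤ) + 1)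
      ((G.Y i).filter fun z => 1 ≤ z ∧ z < G.a t + 1) := by
    rw [Finset.disjoint_left]
    intro z hz hz'
    rcases Finset.mem_filter.1 hz with ⟨-, h1, h2⟩
    rcases Finset.mem_filter.1 hz' with ⟨-, h3, h4⟩
    omega
  calc G.Rcard i s + G.Lcard i t
      = (((G.Y i).filter fun z => G.a s ≤ z ∧ z < (G.ell : ℤ) + 1) ∪
         ((G.Y i).filter fun z => 1 ≤ z ∧ z < G.a t + 1)).card := by
        rw [Finset.card_union_of_disjoint hdisj]; rfl
    _ ≤ (Finset.Icc (1 : ℤ) (G.ell : ℤ)).card := by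
        apply Finset.card_le_card
        intro z hz
        rcases Finset.mem_union.1 hz with hz | hz <;>
          rcases Finset.mem_filter.1 hz with ⟨-, h1, h2⟩ <;>
          exact Finset.mem_Icc.2 (by omega)
    _ = G.ell := by rw [Int.card_Icc]; omega

lemma TB_card (i : ℕ) : (G.TB i).card ≤ 1 := by
  rw [Finset.card_le_one]
  have key : ∀ s ∈ G.TB i, ∀ t ∈ G.TB i, s < t → False := by
    intro s hs t ht hst
    obtain ⟨hsr, hviss, -, hnex⟩ := Finset.mem_filter.1 hs
    obtain ⟨htr, hvist, hfreet, -⟩ := Finset.mem_filter.1 ht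
    have hsT : s < G.T := Finset.mem_range.1 hsr
    have htT : t < G.T := Finset.mem_range.1 htr
    have haY : G.a t ∈ G.Y (G.vis s) := by
      rw [hviss, ← hvist]; exact a_in_Y hG htT
    have hna : G.a t ∉ G.avail s := fun h => hnex ⟨G.a t, (v_a hG htT).1, h⟩
    have hocc := notavail_occ hG hsT (v_a hG htT).1 haY hna
    exact free_not_occ hG hst htT hfreet hocc
  intro s hs t ht
  rcases lt_trichotomy s t with h | h | h
  · exact absurd (key s hs t ht h) (by simp)
  · exact h
  · exact absurd (key t ht s hs h) (by simp)

lemma bad_free_mem {t : ℕ} (ht : t < G.T) (hfree : G.FreeT t) (hbad : ¬ G.GoodT t) :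
    t ∈ G.RB (G.vis t) ∪ G.LB (G.vis t) ∪ G.TB (G.vis t) := by
  by_cases hex : ∃ x ∈ G.I, x ∈ G.avail t
  · obtain ⟨w, how, hwav, hmin⟩ := v_greedy hG ht hex
    have hwI : w ∉ G.I := fun h => hbad ⟨w, how, h⟩
    rw [I, Finset.mem_Icc] at hwI
    push_neg at hwI
    by_cases hw1 : w < 1
    · exact Finset.mem_union_left _ (Finset.mem_union_right _ (Finset.mem_filter.2
        ⟨Finset.mem_range.2 ht, rfl, hfree, w, how, hwav, hmin, hw1⟩))
    · push_neg at hw1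
      have hwl : (G.ell : ℤ) < w := hwI hw1
      exact Finset.mem_union_left _ (Finset.mem_union_left _ (Finset.mem_filter.2
        ⟨Finset.mem_range.2 ht, rfl, hfree, w, how, hwav, hmin, hwl⟩))
  · exact Finset.mem_union_right _ (Finset.mem_filter.2
      ⟨Finset.mem_range.2 ht, rfl, hfree, hex⟩)

end Main2

end GameData
section Chain

lemma filter_lt_max' (S : Finset ℕ) (h : S.Nonempty) :
    S.filter (· < S.max' h) = S.erase (S.max' h) := by
  ext x
  simp only [Finset.mem_filter, Finset.mem_erase]
  constructor
  · rintro ⟨hx, hlt⟩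
    exact ⟨ne_of_lt hlt, hx⟩
  · rintro ⟨hne, hx⟩
    exact ⟨hx, lt_of_le_of_ne (S.le_max' x hx) hne⟩

lemma chain_pow (S : Finset ℕ) (f : ℕ → ℕ) (h1 : ∀ t ∈ S, 1 ≤ f t)
    (h2 : ∀ s ∈ S, ∀ t ∈ S, s < t → 2 * f s ≤ f t) :
    ∀ t ∈ S, 2 ^ (S.filter (· < t)).card ≤ f t := by
  intro t ht
  induction t using Nat.strong_induction_on with
  | _ t ih =>
    rcases (S.filter (· < t)).eq_empty_or_nonempty with he | hne
    · rw [he]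
      simpa using h1 t ht
    · set s := (S.filter (· < t)).max' hne with hs
      have hsmem : s ∈ S.filter (· < t) := (S.filter (· < t)).max'_mem hne
      have hsS : s ∈ S := (Finset.mem_filter.1 hsmem).1
      have hst : s < t := (Finset.mem_filter.1 hsmem).2
      have hcard : (S.filter (· < s)).card + 1 = (S.filter (· < t)).card := by
        have heq : S.filter (· < s) = (S.filter (· < t)).erase s := by
          ext x
          simp only [Finset.mem_filter, Finset.mem_erase]
          constructor
          · rintro ⟨hx, hlt⟩
            exact ⟨ne_of_lt hlt, hx, hlt.trans hst⟩
          · rintro ⟨hne', hx, hlt⟩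
            refine ⟨hx, lt_of_le_of_ne ?_ hne'⟩
            exact (S.filter (· < t)).le_max' x (Finset.mem_filter.2 ⟨hx, hlt⟩)
        rw [heq, Finset.card_erase_of_mem hsmem]
        have : 1 ≤ (S.filter (· < t)).card := Finset.card_pos.2 hne
        omega
      calc 2 ^ (S.filter (· < t)).card = 2 * 2 ^ (S.filter (· < s)).card := by
            rw [← hcard]; ring
        _ ≤ 2 * f s := by
            have := ih s hst hsS
            omega
        _ ≤ f t := h2 s hsS t ht hst

lemma chain_pow_max (S : Finset ℕ) (f : ℕ → ℕ) (h1 : ∀ t ∈ S, 1 ≤ f t)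
    (h2 : ∀ s ∈ S, ∀ t ∈ S, s < t → 2 * f s ≤ f t) (hne : S.Nonempty) :
    2 ^ (S.card - 1) ≤ f (S.max' hne) := by
  have := chain_pow S f h1 h2 (S.max' hne) (S.max'_mem hne)
  rwa [filter_lt_max' S hne, Finset.card_erase_of_mem (S.max'_mem hne)] at this

end Chain
section LogArith

open Real

lemma natpow_le_logb {n m : ℕ} (hm : 1 ≤ m) (h : 2 ^ n ≤ m) :
    (n : ℝ) ≤ Real.logb 2 m := by
  rw [Real.le_logb_iff_rpow_le one_lt_two (by exact_mod_cast Nat.lt_of_lt_of_le Nat.zero_lt_one hm)]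
  rw [Real.rpow_natCast]
  exact_mod_cast h

lemma natpow_sum_le_logb {x y m : ℕ} (hm : 1 ≤ m) (h : 2 ^ x + 2 ^ y ≤ m) :
    (x : ℝ) + (y : ℝ) + 2 ≤ 2 * Real.logb 2 m := by
  have hmpos : (0 : ℝ) < m := by exact_mod_cast Nat.lt_of_lt_of_le Nat.zero_lt_one hm
  have key : (2 : ℝ) ^ (((x : ℝ) + y + 2) / 2) ≤ m := by
    set a : ℝ := (2 : ℝ) ^ ((x : ℝ) / 2) with ha
    set b : ℝ := (2 : ℝ) ^ ((y : ℝ) / 2) with hb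
    have h2ab : 2 * a * b ≤ a ^ 2 + b ^ 2 := two_mul_le_add_sq a b
    have ha2 : a ^ 2 = (2 : ℝ) ^ (x : ℕ) := by
      rw [ha, sq, ← Real.rpow_add (by norm_num)]
      rw [show (x : ℝ) / 2 + (x : ℝ) / 2 = (x : ℝ) by ring, Real.rpow_natCast]
    have hb2 : b ^ 2 = (2 : ℝ) ^ (y : ℕ) := by
      rw [hb, sq, ← Real.rpow_add (by norm_num)]
      rw [show (y : ℝ) / 2 + (y : ℝ) / 2 = (y : ℝ) by ring, Real.rpow_natCast]
    have hab : 2 * a * b = (2 : ℝ) ^ (((x : ℝ) + y + 2) / 2) := by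
      rw [show ((x : ℝ) + y + 2) / 2 = 1 + (x : ℝ) / 2 + (y : ℝ) / 2 by ring,
        Real.rpow_add (by norm_num : (0:ℝ) < 2), Real.rpow_add (by norm_num : (0:ℝ) < 2),
        Real.rpow_one, ha, hb]
    rw [← hab]
    calc 2 * a * b ≤ a ^ 2 + b ^ 2 := h2ab
      _ = (2 : ℝ) ^ (x : ℕ) + (2 : ℝ) ^ (y : ℕ) := by rw [ha2, hb2]
      _ ≤ m := by exact_mod_cast h
  have := (Real.le_logb_iff_rpow_le one_lt_two hmpos).2 key
  linarith

lemma level_arith {kR kL tb m : ℕ} (h2 : 2 ≤ m) (htb : tb ≤ 1)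
    (hR : 1 ≤ kR → 2 ^ (kR - 1) ≤ m) (hL : 1 ≤ kL → 2 ^ (kL - 1) ≤ m)
    (hRL : 1 ≤ kR → 1 ≤ kL → 2 ^ (kR - 1) + 2 ^ (kL - 1) ≤ m) :
    (kR : ℝ) + kL + tb ≤ 2 * Real.logb 2 m + 1 := by
  have hm1 : 1 ≤ m := le_trans (by norm_num) h2
  have hmpos : (0 : ℝ) < m := by exact_mod_cast Nat.lt_of_lt_of_le Nat.zero_lt_one hm1
  have hlog1 : (1 : ℝ) ≤ Real.logb 2 m := by
    rw [Real.le_logb_iff_rpow_le one_lt_two hmpos, Real.rpow_one]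
    exact_mod_cast h2
  have htbR : (tb : ℝ) ≤ 1 := by exact_mod_cast htb
  rcases Nat.eq_zero_or_pos kR with hkR | hkR
  · rcases Nat.eq_zero_or_pos kL with hkL | hkL
    · subst hkR; subst hkL
      simp only [Nat.cast_zero]
      linarith
    · subst hkR
      have := natpow_le_logb hm1 (hL hkL)
      have hcast : ((kL - 1 : ℕ) : ℝ) = (kL : ℝ) - 1 := by
        rw [Nat.cast_sub hkL]; norm_num
      rw [hcast] at this
      simp only [Nat.cast_zero]
      linarith
  · rcases Nat.eq_zero_or_pos kL with hkL | hkL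
    · subst hkL
      have := natpow_le_logb hm1 (hR hkR)
      have hcast : ((kR - 1 : ℕ) : ℝ) = (kR : ℝ) - 1 := by
        rw [Nat.cast_sub hkR]; norm_num
      rw [hcast] at this
      simp only [Nat.cast_zero]
      linarith
    · have := natpow_sum_le_logb hm1 (hRL hkR hkL)
      have hcastR : ((kR - 1 : ℕ) : ℝ) = (kR : ℝ) - 1 := by
        rw [Nat.cast_sub hkR]; norm_num
      have hcastL : ((kL - 1 : ℕ) : ℝ) = (kL : ℝ) - 1 := by
        rw [Nat.cast_sub hkL]; norm_num
      rw [hcastR, hcastL] at this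
      linarith

end LogArith
namespace GameData

variable (G : GameData)

/-- Turns where the algorithm places a white stone in `I`. -/
def GoodSet : Finset ℕ := (Finset.range G.T).filter G.GoodT

/-- Turns where the adversary's stone lands on a white stone. -/
def CollSet : Finset ℕ := (Finset.range G.T).filter fun t => ¬ G.GoodT t ∧ ¬ G.FreeT t

/-- Bad free turns. -/
def BfreeSet : Finset ℕ := (Finset.range G.T).filter fun t => ¬ G.GoodT t ∧ G.FreeT t

section Count

variable {G} (hG : G.Valid)
include hG

lemma GoodSet_le : G.GoodSet.card ≤ (G.white G.T ∩ G.I).card := by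
  have key : ∀ s ∈ G.GoodSet, ∀ t ∈ G.GoodSet, s < t →
      (G.o s).getD 0 ≠ (G.o t).getD 0 := by
    intro s hs t ht hst
    obtain ⟨hsr, ws, hows, hwsI⟩ := Finset.mem_filter.1 hs
    obtain ⟨htr, wt, howt, hwtI⟩ := Finset.mem_filter.1 ht
    rw [hows, howt]
    simp only [Option.getD_some]
    intro heq
    have hav : wt ∈ G.avail t := o_avail hG (Finset.mem_range.1 htr) howt
    have hnot : wt ∉ G.occupiedBefore t := fun h =>
      (Finset.mem_sdiff.1 hav).2
        (Finset.mem_union_left _ (Finset.mem_union_left _ (Finset.mem_union_left _ h)))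
    apply hnot
    apply Finset.mem_union_right
    apply G.white_mono (Nat.succ_le_of_lt hst)
    rw [← heq]
    exact G.o_subset_white hows
  apply Finset.card_le_card_of_injOn (fun t => (G.o t).getD 0)
  · intro t ht
    obtain ⟨htr, w, how, hwI⟩ := Finset.mem_filter.1 ht
    show (G.o t).getD 0 ∈ G.white G.T ∩ G.I
    rw [how]
    simp only [Option.getD_some]
    refine Finset.mem_inter.2 ⟨?_, hwI⟩
    exact G.white_mono (Nat.succ_le_of_lt (Finset.mem_range.1 htr)) (G.o_subset_white how)
  · intro s hs t ht heq
    by_contra hne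
    rcases lt_or_gt_of_ne hne with h | h
    · exact key s hs t ht h heq
    · exact key t ht s hs h heq.symm

lemma CollSet_le : G.CollSet.card ≤ (G.white G.T ∩ G.I).card := by
  apply Finset.card_le_card_of_injOn G.a
  · intro t ht
    obtain ⟨htr, -, hcoll⟩ := Finset.mem_filter.1 ht
    have htT : t < G.T := Finset.mem_range.1 htr
    have : G.a t ∈ G.white (t + 1) := by
      by_contra h
      exact hcoll h
    refine Finset.mem_inter.2 ⟨G.white_mono (Nat.succ_le_of_lt htT) this, (v_a hG htT).1⟩
  · intro s hs t ht heq
    by_contra hne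
    rcases lt_or_gt_of_ne hne with h | h
    · exact a_inj hG h (Finset.mem_range.1 (Finset.mem_filter.1 ht).1) heq
    · exact a_inj hG h (Finset.mem_range.1 (Finset.mem_filter.1 hs).1) heq.symm

lemma card_I : G.I.card = G.ell := by
  rw [I, Int.card_Icc]
  omega

lemma ell_le_parts : G.ell ≤ G.GoodSet.card + G.CollSet.card + G.BfreeSet.card := by
  have h1 : G.ell ≤ (Finset.range G.T).card := by
    calc G.ell = G.I.card := (card_I hG).symm
      _ ≤ (G.black G.T).card := Finset.card_le_card (v_term hG)
      _ ≤ (Finset.range G.T).card := Finset.card_image_le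
  have h2 : Finset.range G.T ⊆ G.GoodSet ∪ G.CollSet ∪ G.BfreeSet := by
    intro t ht
    by_cases hg : G.GoodT t
    · exact Finset.mem_union_left _ (Finset.mem_union_left _ (Finset.mem_filter.2 ⟨ht, hg⟩))
    · by_cases hf : G.FreeT t
      · exact Finset.mem_union_right _ (Finset.mem_filter.2 ⟨ht, hg, hf⟩)
      · exact Finset.mem_union_left _ (Finset.mem_union_right _
          (Finset.mem_filter.2 ⟨ht, hg, hf⟩))
  calc G.ell ≤ (Finset.range G.T).card := h1
    _ ≤ (G.GoodSet ∪ G.CollSet ∪ G.BfreeSet).card := Finset.card_le_card h2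
    _ ≤ (G.GoodSet ∪ G.CollSet).card + G.BfreeSet.card := Finset.card_union_le _ _
    _ ≤ G.GoodSet.card + G.CollSet.card + G.BfreeSet.card := by
        have := Finset.card_union_le G.GoodSet G.CollSet
        omega

lemma Bfree_le_sum : G.BfreeSet.card ≤
    ∑ i ∈ Finset.Icc 1 G.r, ((G.RB i).card + (G.LB i).card + (G.TB i).card) := by
  have hsub : G.BfreeSet ⊆ (Finset.Icc 1 G.r).biUnion fun i => G.RB i ∪ G.LB i ∪ G.TB i := by
    intro t ht
    obtain ⟨htr, hbad, hfree⟩ := Finset.mem_filter.1 ht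
    have htT : t < G.T := Finset.mem_range.1 htr
    refine Finset.mem_biUnion.2 ⟨G.vis t, ?_, bad_free_mem hG htT hfree hbad⟩
    exact Finset.mem_Icc.2 ⟨(v_vis hG htT).1, (v_vis hG htT).2.1⟩
  calc G.BfreeSet.card ≤ ((Finset.Icc 1 G.r).biUnion fun i => G.RB i ∪ G.LB i ∪ G.TB i).card :=
        Finset.card_le_card hsub
    _ ≤ ∑ i ∈ Finset.Icc 1 G.r, (G.RB i ∪ G.LB i ∪ G.TB i).card := Finset.card_biUnion_le
    _ ≤ ∑ i ∈ Finset.Icc 1 G.r, ((G.RB i).card + (G.LB i).card + (G.TB i).card) := by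
        apply Finset.sum_le_sum
        intro i _
        have h1 := Finset.card_union_le (G.RB i ∪ G.LB i) (G.TB i)
        have h2 := Finset.card_union_le (G.RB i) (G.LB i)
        omega

lemma level_bound_real (h2 : 2 ≤ G.ell) (i : ℕ) :
    ((G.RB i).card : ℝ) + (G.LB i).card + (G.TB i).card ≤ 2 * Real.logb 2 G.ell + 1 := by
  apply level_arith h2 (TB_card hG i)
  · intro hR
    have hne : (G.RB i).Nonempty := Finset.card_pos.1 hR
    calc 2 ^ ((G.RB i).card - 1) ≤ G.Rcard i ((G.RB i).max' hne) :=
          chain_pow_max _ _ (fun t ht => Rcard_pos hG ht)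
            (fun s hs t ht hst => RB_double hG hs ht hst) hne
      _ ≤ G.ell := Rcard_le_ell hG ((G.RB i).max'_mem hne)
  · intro hL
    have hne : (G.LB i).Nonempty := Finset.card_pos.1 hL
    calc 2 ^ ((G.LB i).card - 1) ≤ G.Lcard i ((G.LB i).max' hne) :=
          chain_pow_max _ _ (fun t ht => Lcard_pos hG ht)
            (fun s hs t ht hst => LB_double hG hs ht hst) hne
      _ ≤ G.ell := Lcard_le_ell hG ((G.LB i).max'_mem hne)
  · intro hR hL
    have hneR : (G.RB i).Nonempty := Finset.card_pos.1 hR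
    have hneL : (G.LB i).Nonempty := Finset.card_pos.1 hL
    have e1 : 2 ^ ((G.RB i).card - 1) ≤ G.Rcard i ((G.RB i).max' hneR) :=
      chain_pow_max _ _ (fun t ht => Rcard_pos hG ht)
        (fun s hs t ht hst => RB_double hG hs ht hst) hneR
    have e2 : 2 ^ ((G.LB i).card - 1) ≤ G.Lcard i ((G.LB i).max' hneL) :=
      chain_pow_max _ _ (fun t ht => Lcard_pos hG ht)
        (fun s hs t ht hst => LB_double hG hs ht hst) hneL
    have e3 := RL_le_ell hG ((G.RB i).max'_mem hneR) ((G.LB i).max'_mem hneL)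
    omega

end Count

end GameData
/-- In the combinatorial interval game, the white stones in `I` at termination
satisfy `|W_T| ≥ (ℓ − (2 r log₂ ℓ + r)) / 2`, hence
`|W_T| / |I| ≥ 1/2 − O_r((log ℓ)/ℓ)`. -/
theorem game_density_bound (G : GameData) (hG : G.Valid) :
    ((G.ell : ℝ) - (2 * G.r * Real.logb 2 G.ell + G.r)) / 2
      ≤ ((G.white G.T ∩ G.I).card : ℝ) ∧
    1 / 2 - (2 * G.r * Real.logb 2 G.ell + G.r) / (2 * G.ell)
      ≤ ((G.white G.T ∩ G.I).card : ℝ) / G.ell := by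
  have hell : 1 ≤ G.ell := GameData.v_ell hG
  have hr : 1 ≤ G.r := GameData.v_r hG
  have hrR : (1 : ℝ) ≤ G.r := by exact_mod_cast hr
  set W : ℕ := (G.white G.T ∩ G.I).card with hW
  have hWnn : (0 : ℝ) ≤ W := Nat.cast_nonneg W
  have hlpos : (0 : ℝ) < G.ell := by exact_mod_cast Nat.lt_of_lt_of_le Nat.zero_lt_one hell
  have hcount : G.ell ≤ 2 * W + G.BfreeSet.card := by
    have h1 := GameData.ell_le_parts hG
    have h2 := GameData.GoodSet_le hG
    have h3 := GameData.CollSet_le hG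
    omega
  have hfirst : ((G.ell : ℝ) - (2 * G.r * Real.logb 2 G.ell + G.r)) / 2 ≤ (W : ℝ) := by
    by_cases hl2 : 2 ≤ G.ell
    · have hBf : (G.BfreeSet.card : ℝ) ≤ G.r * (2 * Real.logb 2 G.ell + 1) := by
        calc (G.BfreeSet.card : ℝ)
            ≤ ((∑ i ∈ Finset.Icc 1 G.r, ((G.RB i).card + (G.LB i).card + (G.TB i).card) : ℕ) : ℝ) := by
              exact_mod_cast GameData.Bfree_le_sum hG
          _ = ∑ i ∈ Finset.Icc 1 G.r,
              (((G.RB i).card : ℝ) + (G.LB i).card + (G.TB i).card) := by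
              push_cast; ring
          _ ≤ ∑ i ∈ Finset.Icc 1 G.r, (2 * Real.logb 2 G.ell + 1) :=
              Finset.sum_le_sum fun i _ => GameData.level_bound_real hG hl2 i
          _ = G.r * (2 * Real.logb 2 G.ell + 1) := by
              rw [Finset.sum_const, Nat.card_Icc]
              simp [nsmul_eq_mul]; ring
      have hcR : (G.ell : ℝ) ≤ 2 * W + G.BfreeSet.card := by exact_mod_cast hcount
      have hring : (G.r : ℝ) * (2 * Real.logb 2 G.ell + 1) = 2 * G.r * Real.logb 2 G.ell + G.r := by
        ring
      linarith
    · have hl1 : G.ell = 1 := by omega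
      rw [hl1]
      simp only [Nat.cast_one, Real.logb_one]
      linarith
  refine ⟨hfirst, ?_⟩
  have hdiv : ((G.ell : ℝ) - (2 * G.r * Real.logb 2 G.ell + G.r)) / 2 / G.ell ≤ (W : ℝ) / G.ell :=
    div_le_div_of_nonneg_right hfirst hlpos.le
  have heq : ((G.ell : ℝ) - (2 * G.r * Real.logb 2 G.ell + G.r)) / 2 / G.ell
      = 1 / 2 - (2 * G.r * Real.logb 2 G.ell + G.r) / (2 * G.ell) := by
    field_simp
  linarith
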